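/- arXiv:1603.03272 — 5 statements merged into one kernel-verified Lean document; each statement's English description precedes it below -/
import Mathlib

section
/- Let C be a category and let Arr(C) denote the type of all morphisms of C, i.e. triples (X, Y, f) where X and Y are objects of C and f : X ⟶ Y. Suppose that for every object B of C, the constant family indexed by Arr(C) with value B admits a product in C (equivalently, C has limits of shape the discrete category on Arr(C)). Then C is a preorder, i.e. any two parallel morphisms f, g : A ⟶ B of C are equal. -/
open CategoryTheory CategoryTheory.Limits

/-- If a category `C` has products of constant families indexed by its type of
all morphisms `Arr C = Σ (X Y : C), X ⟶ Y`, then `C` is a preorder: any two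
parallel morphisms are equal. -/
theorem preorder_of_hasProduct_arr {C : Type u} [Category.{v} C]
    (h : ∀ B : C, HasProduct (fun _ : (Σ (X : C) (Y : C), X ⟶ Y) => B)) :
    ∀ (A B : C) (f g : A ⟶ B), f = g := by
  intro A B f g
  by_contra hne
  classical
  haveI := h B
  set Arr := (Σ (X : C) (Y : C), X ⟶ Y) with hArr
  let P : C := ∏ᶜ (fun _ : Arr => B)
  have hinj : Function.Injective
      (fun S : Set Arr => (⟨A, P, Pi.lift (fun i => if i ∈ S then f else g)⟩ : Arr)) := by
    intro S T hST
    have hmor : Pi.lift (fun i => if i ∈ S then f else g) =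
        Pi.lift (fun i => if i ∈ T then f else g) := by
      have h2 := eq_of_heq (Sigma.mk.inj_iff.mp hST).2
      exact eq_of_heq (Sigma.mk.inj_iff.mp h2).2
    ext i
    have hcomp : (if i ∈ S then f else g) = (if i ∈ T then f else g) := by
      have h1 := congrArg (fun m => m ≫ Pi.π (fun _ : Arr => B) i) hmor
      simpa using h1
    constructor
    · intro hiS
      by_contra hiT
      simp [hiS, hiT] at hcomp
      exact hne hcomp
    · intro hiT
      by_contra hiS
      simp [hiS, hiT] at hcomp
      exact hne hcomp.symm
  exact Function.cantor_injective _ hinj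
end

section
/- Let C be a category, I a type, and A, B objects of C. Suppose f, g : A ⟶ B are two distinct morphisms, and suppose (P, (π_i : P ⟶ B)_{i ∈ I}) is a product in C of the constant family indexed by I with value B. Then there is an injection from the type of functions I → Bool into the hom-type A ⟶ P. (Consequently 2^{#I} ≤ #(A ⟶ P).) -/
open CategoryTheory

/-- If `f ≠ g : A ⟶ B` and `P` with projections `π i : P ⟶ B` (`i : I`) is a
product of the constant family with value `B`, then there is an injection from
`I → Bool` into the hom-type `A ⟶ P`. -/
theorem embedding_bool_functions_of_product {C : Type u} [Category.{v} C]
    {I : Type w} {A B P : C} (f g : A ⟶ B) (hfg : f ≠ g)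
    (π : I → (P ⟶ B))
    (hP : ∀ (N : C) (n : I → (N ⟶ B)), ∃! v : N ⟶ P, ∀ i, v ≫ π i = n i) :
    Nonempty ((I → Bool) ↪ (A ⟶ P)) := by
  choose v hv _ using fun S : I → Bool => hP A (fun i => if S i then g else f)
  refine ⟨⟨v, fun S T h => funext fun i => ?_⟩⟩
  have := (hv S i).symm.trans (h ▸ hv T i)
  cases hS : S i <;> cases hT : T i <;> simp_all
end

section
/- (Erdős–Rado) Let λ be an infinite cardinal and n a natural number. Define the iterated beth numbers over λ by ℶ_0(λ) = λ and ℶ_{k+1}(λ) = 2^{ℶ_k(λ)}. Let X be a type with #X ≥ (ℶ_n(λ))⁺, and let f be a function from the (n+1)-element finite subsets of X into a type of colors of cardinality at most λ. Then there exist a subset H ⊆ X with #H ≥ λ⁺ and a color γ such that f(s) = γ for every (n+1)-element subset s of H. -/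
open Cardinal

/-- The `k`-fold iterated beth number over a base cardinal `l`:
`ℶ_0(l) = l` and `ℶ_{k+1}(l) = 2 ^ ℶ_k(l)`. -/
def bethIter (l : Cardinal.{u}) : ℕ → Cardinal.{u}
  | 0 => l
  | k + 1 => 2 ^ bethIter l k

universe u

lemma mk_finset_le' (α : Type u) : #(Finset α) ≤ max #α ℵ₀ := by
  cases finite_or_infinite α
  · have : Countable (Finset α) := inferInstance
    exact le_max_of_le_right (mk_le_aleph0)
  · exact le_max_of_le_left (mk_finset_of_infinite α).le

lemma mk_subtype_finset_le {X : Type u} (A₀ : Set X) {μ : Cardinal.{u}}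
    (hμ : ℵ₀ ≤ μ) (h : #A₀ ≤ μ) : #{s : Finset X // ↑s ⊆ A₀} ≤ μ := by
  classical
  have hsurj : Function.Surjective
      (fun t : Finset A₀ => (⟨t.map (Function.Embedding.subtype _), by
        intro x hx
        simp only [Finset.coe_map, Set.mem_image] at hx
        obtain ⟨y, -, rfl⟩ := hx
        exact y.2⟩ : {s : Finset X // ↑s ⊆ A₀})) := by
    rintro ⟨s, hs⟩
    refine ⟨s.preimage Subtype.val (Subtype.val_injective.injOn), ?_⟩
    ext x
    simp only [Finset.mem_map, Finset.mem_preimage, Function.Embedding.coe_subtype]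
    constructor
    · rintro ⟨y, hy, rfl⟩; exact hy
    · intro hx; exact ⟨⟨x, hs hx⟩, hx, rfl⟩
  calc #{s : Finset X // ↑s ⊆ A₀} ≤ #(Finset A₀) := mk_le_of_surjective hsurj
    _ ≤ max #A₀ ℵ₀ := mk_finset_le' _
    _ ≤ μ := max_le h hμ

lemma le_bethIter (l : Cardinal.{u}) (n : ℕ) : l ≤ bethIter l n := by
  induction n with
  | zero => exact le_rfl
  | succ k ih => exact ih.trans (cantor (bethIter l k)).le

lemma aleph0_le_bethIter (l : Cardinal.{u}) (hl : ℵ₀ ≤ l) (n : ℕ) :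
    ℵ₀ ≤ bethIter l n := hl.trans (le_bethIter l n)

-- the inductive step, with IH as hypothesis
lemma erdos_rado_step (l : Cardinal.{u}) (hl : ℵ₀ ≤ l) (n : ℕ)
    (IH : ∀ (Y : Type u), Order.succ (bethIter l n) ≤ #Y →
      ∀ (Colors : Type u), #Colors ≤ l →
      ∀ g : {s : Finset Y // s.card = n + 1} → Colors,
      ∃ (H : Set Y) (γ : Colors), Order.succ l ≤ #H ∧
        ∀ s : {s : Finset Y // s.card = n + 1}, ↑s.1 ⊆ H → g s = γ)
    (X : Type u) (hX : Order.succ (bethIter l (n + 1)) ≤ #X)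
    (Colors : Type u) (hC : #Colors ≤ l)
    (f : {s : Finset X // s.card = n + 2} → Colors) :
    ∃ (H : Set X) (γ : Colors), Order.succ l ≤ #H ∧
      ∀ s : {s : Finset X // s.card = n + 2}, ↑s.1 ⊆ H → f s = γ := by
  classical
  set μ := bethIter l n with hμdef
  have hμω : ℵ₀ ≤ μ := aleph0_le_bethIter l hl n
  set κ := (2 : Cardinal.{u}) ^ μ with hκdef
  have hκeq : bethIter l (n + 1) = κ := rfl
  have hμκ : μ ≤ κ := (cantor μ).le
  have hκω : ℵ₀ ≤ κ := hμω.trans hμκ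
  have hsuccμκ : Order.succ μ ≤ κ := Order.succ_le_of_lt (cantor μ)
  have hlμ : l ≤ μ := le_bethIter l n
  have hκμκ : κ ^ μ = κ := by rw [hκdef, ← power_mul, mul_eq_self hμω]
  have hlμκ : l ^ μ ≤ κ := by
    calc l ^ μ ≤ κ ^ μ := power_le_power_right (hlμ.trans hμκ)
      _ = κ := hκμκ
  have hXκ : Order.succ κ ≤ #X := by rwa [hκeq] at hX
  have hXinf : ℵ₀ ≤ #X := hκω.trans ((Order.le_succ _).trans hXκ)
  haveI : Infinite X := infinite_iff.2 hXinf
  haveI : Inhabited X := Classical.inhabited_of_nonempty inferInstance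
  obtain ⟨s₀, hs₀⟩ := Infinite.exists_subset_card_eq X (n + 2)
  haveI : Inhabited Colors := ⟨f ⟨s₀, hs₀⟩⟩
  -- the "type" of a point: colors of (n+1)-sets extended by the point
  set tp : X → {s : Finset X // s.card = n + 1} → Colors := fun x s =>
    if h : x ∈ s.1 then default
    else f ⟨insert x s.1, by rw [Finset.card_insert_of_notMem h, s.2]⟩ with htp
  -- restriction of a type to subsets of A₀
  set rst : (A₀ : Set X) → ({s : Finset X // s.card = n + 1} → Colors) →
      ({s : Finset X // s.card = n + 1 ∧ ↑s ⊆ A₀} → Colors) :=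
    fun A₀ t s => t ⟨s.1, s.2.1⟩ with hrst
  -- witness choice function
  set wit : (A₀ : Set X) → ({s : Finset X // s.card = n + 1 ∧ ↑s ⊆ A₀} → Colors) → X :=
    fun A₀ σ => if h : ∃ x, x ∉ A₀ ∧ rst A₀ (tp x) = σ then h.choose else default with hwit
  have wit_spec : ∀ A₀ σ, (∃ x, x ∉ A₀ ∧ rst A₀ (tp x) = σ) →
      wit A₀ σ ∉ A₀ ∧ rst A₀ (tp (wit A₀ σ)) = σ := by
    intro A₀ σ h
    rw [hwit]
    simp only [dif_pos h]
    exact h.choose_spec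
  -- one-step saturation
  set next : Set X → Set X := fun B => B ∪ Set.range
      (fun q : (Σ A₀ : {S : Set X // S ⊆ B ∧ #S ≤ μ},
        ({s : Finset X // s.card = n + 1 ∧ ↑s ⊆ A₀.1} → Colors)) => wit q.1.1 q.2) with hnext
  have next_sub : ∀ B, B ⊆ next B := fun B => Set.subset_union_left
  have next_wit : ∀ (B A₀ : Set X), A₀ ⊆ B → #A₀ ≤ μ →
      ∀ σ, wit A₀ σ ∈ next B := by
    intro B A₀ h1 h2 σ
    exact Set.mem_union_right _ ⟨⟨⟨A₀, h1, h2⟩, σ⟩, rfl⟩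
  have dom_card : ∀ A₀ : Set X, #A₀ ≤ μ →
      #{s : Finset X // s.card = n + 1 ∧ ↑s ⊆ A₀} ≤ μ := by
    intro A₀ h
    refine le_trans (mk_le_of_injective (f := fun s : {s : Finset X // s.card = n + 1 ∧ ↑s ⊆ A₀} =>
      (⟨s.1, s.2.2⟩ : {s : Finset X // ↑s ⊆ A₀})) ?_) (mk_subtype_finset_le A₀ hμω h)
    rintro ⟨a, ha⟩ ⟨b, hb⟩ hab
    simp only [Subtype.mk.injEq] at hab ⊢
    exact hab
  have next_card : ∀ B : Set X, #B ≤ κ → #(next B) ≤ κ := by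
    intro B hB
    rw [hnext]
    refine le_trans (mk_union_le _ _) ?_
    have hrange : #(Set.range (fun q : (Σ A₀ : {S : Set X // S ⊆ B ∧ #S ≤ μ},
        ({s : Finset X // s.card = n + 1 ∧ ↑s ⊆ A₀.1} → Colors)) => wit q.1.1 q.2)) ≤ κ := by
      refine le_trans mk_range_le ?_
      rw [mk_sigma]
      have hbound : ∀ A₀ : {S : Set X // S ⊆ B ∧ #S ≤ μ},
          #({s : Finset X // s.card = n + 1 ∧ ↑s ⊆ A₀.1} → Colors) ≤ κ := by
        intro A₀
        rw [← power_def]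
        calc #Colors ^ #{s : Finset X // s.card = n + 1 ∧ ↑s ⊆ A₀.1}
            ≤ l ^ #{s : Finset X // s.card = n + 1 ∧ ↑s ⊆ A₀.1} := by
              by_cases hz : l = 0
              · exact absurd hl (by rw [hz]; exact not_le.2 aleph0_pos)
              · exact power_le_power_right hC
          _ ≤ l ^ μ := by
              have hz : l ≠ 0 := by
                intro h
                rw [h] at hl
                exact (not_le.2 aleph0_pos) hl
              exact power_le_power_left hz (dom_card A₀.1 A₀.2.2)
          _ ≤ κ := hlμκ
      refine le_trans (Cardinal.sum_le_sum _ (fun _ => κ) hbound) ?_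
      rw [sum_const']
      have hι : #{S : Set X // S ⊆ B ∧ #S ≤ μ} ≤ κ := by
        refine le_trans (mk_bounded_subset_le B μ) ?_
        calc max #B ℵ₀ ^ μ ≤ κ ^ μ := power_le_power_right (max_le hB hκω)
          _ = κ := hκμκ
      calc #{S : Set X // S ⊆ B ∧ #S ≤ μ} * κ ≤ κ * κ := mul_le_mul_left hι κ
        _ = κ := mul_eq_self hκω
    calc #B + _ ≤ κ + κ := add_le_add hB hrange
      _ = κ := add_eq_self hκω
  -- the index well-order of length succ μ
  set W := (Order.succ μ).ord.ToType with hW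
  have hWcard : #W = Order.succ μ := by rw [hW, Cardinal.mk_toType, card_ord]
  have hIio : ∀ w : W, #(Set.Iio w) ≤ μ := by
    intro w
    exact Order.lt_succ_iff.1 (Cardinal.mk_Iio_ord_toType w)
  haveI hwoW : IsWellOrder W ((· < ·) : W → W → Prop) :=
    isWellOrder_lt
  have hbddW : ∀ S : Set W, #S ≤ μ → ∃ wb : W, ∀ w ∈ S, w < wb := by
    intro S hS
    have hcof : #S < Ordinal.cof (Ordinal.type ((· < ·) : W → W → Prop)) := by
      have h1 : Ordinal.type ((· < ·) : W → W → Prop) = (Order.succ μ).ord :=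
        Ordinal.type_toType _
      rw [h1, (isRegular_succ hμω).cof_eq]
      exact lt_of_le_of_lt hS (Order.lt_succ μ)
    exact not_isCofinal_iff.1 (fun hc => (Order.cof_le hc).not_gt (hcof.trans_eq (Ordinal.cof_type W)))
  -- the chain
  set chain : W → Set X := WellFounded.fix
      (IsWellFounded.wf (r := ((· < ·) : W → W → Prop)))
      (fun w ih => next (⋃ w' : Set.Iio w, ih w'.1 w'.2)) with hchain
  have chain_eq : ∀ w, chain w = next (⋃ w' : Set.Iio w, chain w'.1) := by
    intro w
    rw [hchain]
    exact WellFounded.fix_eq _ _ w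
  have chain_mono : ∀ w w' : W, w' < w → chain w' ⊆ chain w := by
    intro w w' h
    rw [chain_eq w]
    exact subset_trans (Set.subset_iUnion (fun w'' : Set.Iio w => chain w''.1) ⟨w', h⟩)
      (next_sub _)
  have chain_card : ∀ w, #(chain w) ≤ κ := by
    intro w
    induction w using WellFounded.induction (IsWellFounded.wf (r := ((· < ·) : W → W → Prop)))
      with
    | _ w ihw =>
      rw [chain_eq w]
      apply next_card
      refine le_trans mk_iUnion_le_sum_mk ?_
      refine le_trans (Cardinal.sum_le_sum _ (fun _ => κ) (fun w' => ihw w'.1 w'.2)) ?_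
      rw [sum_const']
      calc #(Set.Iio w) * κ ≤ κ * κ := mul_le_mul_left ((hIio w).trans hμκ) κ
        _ = κ := mul_eq_self hκω
  set A : Set X := ⋃ w : W, chain w with hA
  have hAcard : #A ≤ κ := by
    rw [hA]
    refine le_trans mk_iUnion_le_sum_mk ?_
    refine le_trans (Cardinal.sum_le_sum _ (fun _ => κ) (fun w => chain_card w)) ?_
    rw [sum_const']
    calc #W * κ ≤ κ * κ := mul_le_mul_left (hWcard ▸ hsuccμκ) κ
      _ = κ := mul_eq_self hκω
  have sub_chain : ∀ S : Set X, S ⊆ A → #S ≤ μ → ∃ w, S ⊆ chain w := by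
    intro S hS hcard
    have hmem : ∀ x : S, ∃ w, (x : X) ∈ chain w := fun x => Set.mem_iUnion.1 (hS x.2)
    choose idx hidx using hmem
    obtain ⟨wb, hwb⟩ := hbddW (Set.range idx) (mk_range_le.trans hcard)
    refine ⟨wb, fun x hx => ?_⟩
    exact chain_mono wb (idx ⟨x, hx⟩) (hwb _ ⟨⟨x, hx⟩, rfl⟩) (hidx ⟨x, hx⟩)
  have wit_mem : ∀ A₀ : Set X, A₀ ⊆ A → #A₀ ≤ μ →
      ∀ σ : {s : Finset X // s.card = n + 1 ∧ ↑s ⊆ A₀} → Colors, wit A₀ σ ∈ A := by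
    intro A₀ hsubA hcard σ
    obtain ⟨w₀, hw₀⟩ := sub_chain A₀ hsubA hcard
    obtain ⟨w₁, hw₁⟩ := hbddW {w₀} (le_trans (le_of_lt (by
      rw [mk_singleton]; exact one_lt_aleph0)) hμω)
    have h01 : w₀ < w₁ := hw₁ w₀ rfl
    have hsub : A₀ ⊆ ⋃ w' : Set.Iio w₁, chain w'.1 := by
      intro x hx
      exact Set.mem_iUnion.2 ⟨⟨w₀, h01⟩, hw₀ hx⟩
    have : wit A₀ σ ∈ chain w₁ := by
      rw [chain_eq w₁]
      exact next_wit _ A₀ hsub hcard σ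
    exact Set.mem_iUnion.2 ⟨w₁, this⟩
  -- a point outside A
  have hpex : ∃ p : X, p ∉ A := by
    by_contra h
    push_neg at h
    have hXA : #X ≤ κ := by
      have huniv : A = Set.univ := Set.eq_univ_of_forall h
      calc #X = #A := by rw [huniv, mk_univ]
        _ ≤ κ := hAcard
    have : Order.succ κ ≤ κ := hXκ.trans hXA
    exact absurd (Order.lt_succ κ) (not_lt.2 this)
  obtain ⟨p, hp⟩ := hpex
  -- the end-homogeneous sequence
  set b : W → X := WellFounded.fix
      (IsWellFounded.wf (r := ((· < ·) : W → W → Prop)))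
      (fun w ih =>
        wit (Set.range fun w' : Set.Iio w => ih w'.1 w'.2)
          (rst (Set.range fun w' : Set.Iio w => ih w'.1 w'.2) (tp p))) with hb
  have b_eq : ∀ w, b w = wit (b '' Set.Iio w) (rst (b '' Set.Iio w) (tp p)) := by
    intro w
    rw [Set.image_eq_range]
    rw [hb]
    exact WellFounded.fix_eq _ _ w
  have hBcard : ∀ w, #(b '' Set.Iio w) ≤ μ := fun w => mk_image_le.trans (hIio w)
  have b_inA : ∀ w, b w ∈ A := by
    intro w
    induction w using WellFounded.induction (IsWellFounded.wf (r := ((· < ·) : W → W → Prop)))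
      with
    | _ w ihw =>
      have hsubA : b '' Set.Iio w ⊆ A := by
        rintro x ⟨w', hw', rfl⟩
        exact ihw w' hw'
      rw [b_eq w]
      exact wit_mem _ hsubA (hBcard w) _
  have b_spec : ∀ w, b w ∉ b '' Set.Iio w ∧
      rst (b '' Set.Iio w) (tp (b w)) = rst (b '' Set.Iio w) (tp p) := by
    intro w
    have hpnot : p ∉ b '' Set.Iio w := by
      intro hmem
      rcases hmem with ⟨w', _, hw'⟩
      exact hp (hw' ▸ b_inA w')
    rw [b_eq w]
    exact wit_spec _ _ ⟨p, hpnot, rfl⟩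
  have b_inj : Function.Injective b := by
    intro w w' hww
    by_contra hne
    rcases lt_or_gt_of_ne hne with h | h
    · exact (b_spec w').1 ⟨w, h, hww⟩
    · exact (b_spec w).1 ⟨w', h, hww.symm⟩
  -- apply the induction hypothesis on the range of b
  have hY : Order.succ (bethIter l n) ≤ #(Set.range b) := by
    rw [mk_range_eq b b_inj, hWcard]
  set emb : (Set.range b) ↪ X := Function.Embedding.subtype _ with hemb
  set g : {t : Finset (Set.range b) // t.card = n + 1} → Colors := fun t =>
    tp p ⟨t.1.map emb, by rw [Finset.card_map, t.2]⟩ with hg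
  obtain ⟨H', γ, hH'card, hH'hom⟩ := IH (Set.range b) hY Colors hC g
  refine ⟨Subtype.val '' H', γ, ?_, ?_⟩
  · rwa [mk_image_eq Subtype.val_injective]
  · rintro ⟨s, hs⟩ hsub
    -- each element of s lies in the range of b
    have hrange : ∀ x ∈ s, x ∈ Set.range b := by
      intro x hx
      rcases hsub hx with ⟨y, _, rfl⟩
      exact y.2
    set t' : Finset (Set.range b) := s.preimage Subtype.val Subtype.val_injective.injOn
      with ht'
    have ht'map : t'.map emb = s := by
      ext x
      simp only [Finset.mem_map, ht', Finset.mem_preimage, hemb,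
        Function.Embedding.coe_subtype]
      constructor
      · rintro ⟨y, hy, rfl⟩; exact hy
      · intro hx; exact ⟨⟨x, hrange x hx⟩, hx, rfl⟩
    have ht'H' : ↑t' ⊆ H' := by
      intro y hy
      have : (y : X) ∈ s := by
        rw [ht'] at hy
        exact Finset.mem_preimage.1 hy
      rcases hsub this with ⟨z, hz, hzy⟩
      rwa [Subtype.val_injective hzy] at hz
    have ht'card : t'.card = n + 2 := by
      rw [← Finset.card_map emb, ht'map, hs]
    -- pull back to the index well-order
    have b'_inj : Function.Injective (fun w : W => (⟨b w, Set.mem_range_self w⟩ :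
        Set.range b)) := by
      intro w w' h
      exact b_inj (congrArg Subtype.val h)
    set b' : W ↪ Set.range b := ⟨fun w => ⟨b w, Set.mem_range_self w⟩, b'_inj⟩ with hb'
    set u : Finset W := t'.preimage b' b'_inj.injOn with hu
    have humap : u.map b' = t' := by
      ext y
      simp only [Finset.mem_map, hu, Finset.mem_preimage]
      constructor
      · rintro ⟨w, hw, rfl⟩; exact hw
      · intro hy
        obtain ⟨w, hw⟩ := y.2
        refine ⟨w, ?_, ?_⟩
        · have : b' w = y := Subtype.ext hw
          rwa [this]
        · exact Subtype.ext hw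
    have hucard : u.card = n + 2 := by rw [← Finset.card_map b', humap, ht'card]
    have hune : u.Nonempty := Finset.card_pos.1 (by rw [hucard]; omega)
    set wm := u.max' hune with hwm
    set m := b wm with hm
    have hmt' : b' wm ∈ t' := by
      rw [← humap]
      exact Finset.mem_map_of_mem b' (u.max'_mem hune)
    have hms : m ∈ s := by
      rw [← ht'map]
      have := Finset.mem_map_of_mem emb hmt'
      simpa [hemb, hm, hb'] using this
    set t : Finset X := s.erase m with ht
    have htcard : t.card = n + 1 := by
      rw [ht, Finset.card_erase_of_mem hms, hs]
      omega
    have htsub : ↑t ⊆ b '' Set.Iio wm := by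
      intro x hx
      have hxs : x ∈ s := Finset.mem_of_mem_erase (by rwa [← ht])
      have hxm : x ≠ m := Finset.ne_of_mem_erase (by rwa [← ht])
      have hxt' : (⟨x, hrange x hxs⟩ : Set.range b) ∈ t' := by
        rw [ht']
        exact Finset.mem_preimage.2 hxs
      rw [← humap] at hxt'
      rcases Finset.mem_map.1 hxt' with ⟨w, hwu, hwx⟩
      have hwwm : w < wm := by
        rcases lt_or_eq_of_le (u.le_max' w hwu) with h | h
        · exact h
        · exfalso
          apply hxm
          have hval : b w = x := congrArg Subtype.val hwx
          exact (h ▸ hval).symm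
      refine ⟨w, hwwm, ?_⟩
      have := congrArg Subtype.val hwx
      simpa [hb'] using this
    have hmnott : m ∉ t := Finset.notMem_erase m s
    -- main chain of equalities
    have e1 : f ⟨s, hs⟩ = tp m ⟨t, htcard⟩ := by
      rw [htp]
      simp only []
      rw [dif_neg hmnott]
      congr 1
      apply Subtype.ext
      simp only []
      rw [ht, Finset.insert_erase hms]
    have e2 : tp m ⟨t, htcard⟩ = tp p ⟨t, htcard⟩ := by
      have := congrFun (b_spec wm).2 ⟨t, ⟨htcard, htsub⟩⟩
      rw [hrst] at this
      simpa [hm] using this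
    set tY : Finset (Set.range b) := t'.erase (b' wm) with htY
    have htYcard : tY.card = n + 1 := by
      rw [htY, Finset.card_erase_of_mem hmt', ht'card]
      omega
    have htYsub : ↑tY ⊆ H' := fun y hy => ht'H' (Finset.erase_subset _ _ (by rwa [← htY]))
    have htYmap : tY.map emb = t := by
      rw [htY, Finset.map_erase, ht'map, ht]
      rfl
    have e3 : tp p ⟨t, htcard⟩ = g ⟨tY, htYcard⟩ := by
      rw [hg]
      simp only []
      congr 1
      apply Subtype.ext
      simp only []
      rw [htYmap]
    rw [e1, e2, e3]
    exact hH'hom ⟨tY, htYcard⟩ htYsub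

/-- **Erdős–Rado theorem.** If `l` is an infinite cardinal, `#X ≥ (ℶ_n(l))⁺`,
and `f` colors the `(n+1)`-element finite subsets of `X` with at most `l`
colors, then there are `H ⊆ X` with `#H ≥ l⁺` and a color `γ` such that every
`(n+1)`-element subset of `H` gets color `γ`. -/
theorem erdos_rado (l : Cardinal.{u}) (hl : ℵ₀ ≤ l) (n : ℕ)
    (X : Type u) (hX : Order.succ (bethIter l n) ≤ #X)
    (Colors : Type u) (hC : #Colors ≤ l)
    (f : {s : Finset X // s.card = n + 1} → Colors) :
    ∃ (H : Set X) (γ : Colors), Order.succ l ≤ #H ∧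
      ∀ s : {s : Finset X // s.card = n + 1}, ↑s.1 ⊆ H → f s = γ := by
  induction n generalizing X Colors with
  | zero =>
    -- pigeonhole
    classical
    set g : X → Colors := fun x => f ⟨{x}, Finset.card_singleton x⟩ with hg
    by_contra hcon
    push_neg at hcon
    have hfib : ∀ γ : Colors, #(g ⁻¹' {γ}) ≤ l := by
      intro γ
      by_contra hbig
      push_neg at hbig
      have hsucc : Order.succ l ≤ #(g ⁻¹' {γ}) := Order.succ_le_of_lt hbig
      obtain ⟨s, hsub, hne⟩ := hcon (g ⁻¹' {γ}) γ hsucc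
      rcases Finset.card_eq_one.1 s.2 with ⟨x, hx⟩
      apply hne
      have hxmem : x ∈ g ⁻¹' {γ} := by
        apply hsub
        rw [hx]; exact Finset.mem_coe.2 (Finset.mem_singleton_self x)
      have : f s = g x := by
        rw [hg]
        congr 1
        exact Subtype.ext hx
      rw [this]
      exact hxmem
    -- #X ≤ #Colors * l ≤ l
    have h1 : #X ≤ l := by
      have e := (Equiv.sigmaFiberEquiv g).symm
      have : #X = Cardinal.sum fun γ : Colors => #{x : X // g x = γ} := by
        rw [← mk_sigma]; exact mk_congr e
      rw [this]
      calc Cardinal.sum (fun γ : Colors => #{x : X // g x = γ})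
          ≤ Cardinal.sum (fun _ : Colors => l) := by
            apply Cardinal.sum_le_sum
            intro γ
            have : #{x : X // g x = γ} = #(g ⁻¹' {γ}) := by
              apply mk_congr
              exact (Equiv.setCongr (by ext x; exact Iff.rfl)).symm.trans (Equiv.refl _)
            rw [this]; exact hfib γ
        _ = #Colors * l := sum_const' _ _
        _ ≤ l * l := mul_le_mul_left hC l
        _ = l := mul_eq_self hl
    have : Order.succ l ≤ l := le_trans (by exact hX) h1
    exact absurd (Order.lt_succ l) (not_lt.2 this)
  | succ k ih =>
    exact erdos_rado_step l hl k (fun Y hY C hCY g => ih Y hY C hCY g) X hX Colors hC f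
end

section
/- In the category Rel of types and binary relations, every small family of objects has a product: given a type I and a family F : I → Type of objects of Rel, the sigma type P = Σ i, F i together with the projection relations π_i ⊆ P × F i defined by (⟨x, i⟩) π_i y ↔ (x = y), forms a product of the family F in Rel. In particular, Rel has all small products. -/
open CategoryTheory

/-- In the category `RelCat` of types and relations, the sigma type
`Σ i, F i`, with the projection relations relating `⟨i, x⟩` to `y : F i`
iff `x = y`, is a product of the family `F`: every cone factors through it
via a unique morphism. In particular `RelCat` has all small products. -/
theorem relCat_sigma_isProduct (I : Type u) (F : I → RelCat.{u}) :
    ∀ (N : RelCat.{u}) (R : ∀ i : I, N ⟶ F i),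
      ∃! u : N ⟶ ((Σ i, F i) : RelCat.{u}),
        ∀ i : I, u ≫ RelCat.Hom.ofRel {q : (Σ i, F i) × F i | q.1 = ⟨i, q.2⟩} = R i := by
  intro N R
  refine ⟨RelCat.Hom.ofRel {q : N × (Σ i, F i) | (q.1, q.2.2) ∈ (R q.2.1).rel}, ?_, ?_⟩
  · intro i
    ext ⟨n, y⟩
    constructor
    · rintro ⟨p, hp, hpe⟩
      change p = ⟨i, y⟩ at hpe
      subst hpe
      exact hp
    · intro h
      exact ⟨⟨i, y⟩, h, rfl⟩
  · intro v hv
    ext ⟨n, ⟨i, y⟩⟩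
    have := congrArg (fun f => (n, y) ∈ RelCat.Hom.rel f) (hv i)
    simp only [eq_iff_iff] at this
    constructor
    · intro h
      exact this.mp ⟨⟨i, y⟩, h, rfl⟩
    · intro h
      obtain ⟨p, hp, hpe⟩ := this.mpr h
      change p = ⟨i, y⟩ at hpe
      cases hpe
      exact hp
end

section
/- (Reflection principle over the universe of ZF sets) Let L be the first-order language with a single binary relation symbol, and regard the type ZFSet of ZF sets as an L-structure by interpreting the relation symbol as membership ∈. Then for every natural number n, every L-formula φ(x₀, …, x_{n−1}) with n free variables, and every A : ZFSet, there exists a ZF set M such that: M is transitive (x ∈ y ∈ M → x ∈ M), M is supertransitive (x ⊆ y ∈ M → x ∈ M), A ∈ M, and for all a₀, …, a_{n−1} ∈ M, the formula φ(a₀, …, a_{n−1}) holds in the induced L-structure on the elements of M if and only if φ(a₀, …, a_{n−1}) holds in the L-structure ZFSet. -/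
open FirstOrder

/-- The single binary relation symbol of the language of set theory. -/
inductive MemSym : ℕ → Type
  | mem : MemSym 2

/-- The first-order language with a single binary relation symbol. -/
def memLang : FirstOrder.Language := ⟨fun _ => Empty, MemSym⟩

/-- `ZFSet` as a `memLang`-structure, interpreting the relation symbol as `∈`. -/
instance : memLang.Structure ZFSet.{u} where
  funMap := fun f _ => f.elim
  RelMap := fun r v => match r with | .mem => v 0 ∈ v 1

/-- Any `M : ZFSet` induces a `memLang`-structure on the elements of `M`. -/
instance (M : ZFSet.{u}) : memLang.Structure {x : ZFSet.{u} // x ∈ M} where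
  funMap := fun f _ => f.elim
  RelMap := fun r v => match r with | .mem => (v 0).1 ∈ (v 1).1

section aux
open FirstOrder.Language

lemma term_val {M : ZFSet.{u}} {α : Type*} (t : memLang.Term α)
    (v : α → {x : ZFSet.{u} // x ∈ M}) :
    t.realize (fun i => (v i).1) = (t.realize v).1 := by
  cases t with
  | var => rfl
  | func f ts => exact Empty.elim f

lemma key_equiv (M : ZFSet.{u})
    (hw : ∀ (k m : ℕ) (ψ : memLang.BoundedFormula (Fin k) (m + 1))
      (a : Fin k → ZFSet.{u}) (b : Fin m → ZFSet.{u}),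
      (∀ i, a i ∈ M) → (∀ i, b i ∈ M) →
      (∃ x, ψ.Realize a (Fin.snoc b x)) → ∃ x ∈ M, ψ.Realize a (Fin.snoc b x)) :
    ∀ (k m : ℕ) (ψ : memLang.BoundedFormula (Fin k) m)
      (a : Fin k → {x : ZFSet.{u} // x ∈ M}) (b : Fin m → {x : ZFSet.{u} // x ∈ M}),
      ψ.Realize a b ↔ ψ.Realize (fun i => (a i).1) (fun i => (b i).1) := by
  intro k m ψ
  induction ψ with
  | falsum => intro a b; exact Iff.rfl
  | equal t₁ t₂ =>
    intro a b
    have e : (fun i => ((Sum.elim a b) i).1) = Sum.elim (fun i => (a i).1) (fun i => (b i).1) := by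
      funext i; cases i <;> rfl
    show t₁.realize (Sum.elim a b) = t₂.realize (Sum.elim a b) ↔ _
    rw [show (BoundedFormula.equal t₁ t₂).Realize (fun i => (a i).1) (fun i => (b i).1) ↔
        t₁.realize (Sum.elim (fun i => (a i).1) (fun i => (b i).1)) =
        t₂.realize (Sum.elim (fun i => (a i).1) (fun i => (b i).1)) from Iff.rfl]
    rw [← e, term_val t₁, term_val t₂, Subtype.ext_iff]
  | rel R ts =>
    intro a b
    cases R
    show ((ts 0).realize (Sum.elim a b)).1 ∈ ((ts 1).realize (Sum.elim a b)).1 ↔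
      (ts 0).realize (Sum.elim (fun i => (a i).1) (fun i => (b i).1)) ∈
      (ts 1).realize (Sum.elim (fun i => (a i).1) (fun i => (b i).1))
    have e : (fun i => ((Sum.elim a b) i).1) = Sum.elim (fun i => (a i).1) (fun i => (b i).1) := by
      funext i; cases i <;> rfl
    rw [← e, term_val (ts 0), term_val (ts 1)]
  | imp ψ₁ ψ₂ ih₁ ih₂ =>
    intro a b
    simp only [BoundedFormula.realize_imp, ih₁, ih₂]
  | all ψ ih =>
    intro a b
    simp only [BoundedFormula.realize_all]
    constructor
    · intro H
      by_contra hc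
      push_neg at hc
      obtain ⟨x, hx⟩ := hc
      have hex : ∃ x, ψ.not.Realize (fun i => (a i).1)
          (Fin.snoc (fun i => (b i).1) x) := by
        exact ⟨x, by simp [BoundedFormula.realize_not, hx]⟩
      obtain ⟨y, hyM, hy⟩ := hw _ _ ψ.not _ _ (fun i => (a i).2) (fun i => (b i).2) hex
      rw [BoundedFormula.realize_not] at hy
      apply hy
      have := (ih a (Fin.snoc b ⟨y, hyM⟩)).1 (H ⟨y, hyM⟩)
      have e : (fun i => ((Fin.snoc b ⟨y, hyM⟩ : Fin _ → {x : ZFSet.{u} // x ∈ M}) i).1)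
          = Fin.snoc (fun i => (b i).1) y := by
        have := Fin.comp_snoc (fun z : {x : ZFSet.{u} // x ∈ M} => z.1) b ⟨y, hyM⟩
        exact this
      rwa [e] at this
    · intro H x
      rw [ih]
      have e : (fun i => ((Fin.snoc b x : Fin _ → {x : ZFSet.{u} // x ∈ M}) i).1)
          = Fin.snoc (fun i => (b i).1) x.1 := by
        exact Fin.comp_snoc (fun z : {x : ZFSet.{u} // x ∈ M} => z.1) b x
      rw [e]
      exact H x.1


open FirstOrder.Language
open scoped ZFSet

instance small_toSet_aux (S : ZFSet.{u}) : Small.{u} S.toSet := ZFSet.small_coe S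

def WitIdx (S : ZFSet.{u}) : Type u :=
  Σ (k : ℕ) (m : ℕ), memLang.BoundedFormula (Fin k) (m + 1) ×
    (Fin k → Shrink.{u} S.toSet) × (Fin m → Shrink.{u} S.toSet)

open Classical in
noncomputable def witFun (S : ZFSet.{u}) (p : WitIdx S) : ZFSet.{u} :=
  if h : ∃ x, p.2.2.1.Realize (fun i => (((equivShrink.{u} S.toSet).symm (p.2.2.2.1 i)) : ZFSet.{u}))
      (Fin.snoc (fun i => (((equivShrink.{u} S.toSet).symm (p.2.2.2.2 i)) : ZFSet.{u})) x)
  then h.choose else ∅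

noncomputable def stepSet (S : ZFSet.{u}) : ZFSet.{u} :=
  S ∪ ⋃₀ S ∪ ⋃₀ (ZFSet.range (fun z : Shrink.{u} S.toSet =>
      ZFSet.powerset ((equivShrink.{u} S.toSet).symm z : ZFSet.{u}))) ∪ ZFSet.range (witFun S)

lemma subset_stepSet (S : ZFSet.{u}) : S ⊆ stepSet S := fun x hx =>
  ZFSet.mem_union.2 (Or.inl (ZFSet.mem_union.2 (Or.inl (ZFSet.mem_union.2 (Or.inl hx)))))

noncomputable def chain (A : ZFSet.{u}) : ℕ → ZFSet.{u}
  | 0 => {A}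
  | j + 1 => stepSet (chain A j)

lemma chain_mono (A : ZFSet.{u}) {i j : ℕ} (h : i ≤ j) : chain A i ⊆ chain A j := by
  induction j with
  | zero => cases Nat.le_zero.1 h; exact fun _ h => h
  | succ j ih =>
    rcases Nat.lt_or_ge i (j+1) with h' | h'
    · exact fun x hx => subset_stepSet _ (ih (Nat.lt_succ_iff.1 h') hx)
    · cases Nat.le_antisymm h h'; exact fun _ h => h

noncomputable def bigM (A : ZFSet.{u}) : ZFSet.{u} := ⋃₀ ZFSet.range (chain A)

lemma mem_bigM {A x : ZFSet.{u}} : x ∈ bigM A ↔ ∃ j, x ∈ chain A j := by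
  simp only [bigM, ZFSet.mem_sUnion, ZFSet.mem_range, Set.mem_range]
  constructor
  · rintro ⟨z, ⟨j, rfl⟩, hx⟩; exact ⟨j, hx⟩
  · rintro ⟨j, hx⟩; exact ⟨chain A j, ⟨j, rfl⟩, hx⟩

lemma bigM_trans {A : ZFSet.{u}} {x y : ZFSet.{u}} (hxy : x ∈ y) (hy : y ∈ bigM A) :
    x ∈ bigM A := by
  obtain ⟨j, hj⟩ := mem_bigM.1 hy
  refine mem_bigM.2 ⟨j + 1, ?_⟩
  exact ZFSet.mem_union.2 (Or.inl (ZFSet.mem_union.2 (Or.inl (ZFSet.mem_union.2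
    (Or.inr (ZFSet.mem_sUnion.2 ⟨y, hj, hxy⟩))))))

lemma bigM_supertrans {A : ZFSet.{u}} {x y : ZFSet.{u}} (hxy : x ⊆ y) (hy : y ∈ bigM A) :
    x ∈ bigM A := by
  obtain ⟨j, hj⟩ := mem_bigM.1 hy
  refine mem_bigM.2 ⟨j + 1, ?_⟩
  refine ZFSet.mem_union.2 (Or.inl (ZFSet.mem_union.2 (Or.inr ?_)))
  refine ZFSet.mem_sUnion.2 ⟨ZFSet.powerset y, ?_, ZFSet.mem_powerset.2 hxy⟩
  rw [ZFSet.mem_range]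
  exact ⟨equivShrink _ ⟨y, hj⟩, by simp⟩

lemma A_mem_bigM (A : ZFSet.{u}) : A ∈ bigM A :=
  mem_bigM.2 ⟨0, ZFSet.mem_singleton.2 rfl⟩

lemma bigM_witness (A : ZFSet.{u}) (k m : ℕ) (ψ : memLang.BoundedFormula (Fin k) (m + 1))
    (a : Fin k → ZFSet.{u}) (b : Fin m → ZFSet.{u})
    (ha : ∀ i, a i ∈ bigM A) (hb : ∀ i, b i ∈ bigM A)
    (hex : ∃ x, ψ.Realize a (Fin.snoc b x)) :
    ∃ x ∈ bigM A, ψ.Realize a (Fin.snoc b x) := by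
  -- find a common level
  have ha' : ∀ i, ∃ j, a i ∈ chain A j := fun i => mem_bigM.1 (ha i)
  have hb' : ∀ i, ∃ j, b i ∈ chain A j := fun i => mem_bigM.1 (hb i)
  choose ja hja using ha'
  choose jb hjb using hb'
  obtain ⟨j, hj⟩ : ∃ j, (∀ i, ja i ≤ j) ∧ (∀ i, jb i ≤ j) := by
    refine ⟨(Finset.univ.sup ja) ⊔ (Finset.univ.sup jb), ?_, ?_⟩
    · exact fun i => le_sup_of_le_left (Finset.le_sup (Finset.mem_univ i))
    · exact fun i => le_sup_of_le_right (Finset.le_sup (Finset.mem_univ i))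
  have haj : ∀ i, a i ∈ chain A j := fun i => chain_mono A (hj.1 i) (hja i)
  have hbj : ∀ i, b i ∈ chain A j := fun i => chain_mono A (hj.2 i) (hjb i)
  set S := chain A j with hS
  let aa : Fin k → Shrink.{u} S.toSet := fun i => equivShrink.{u} S.toSet ⟨a i, haj i⟩
  let bb : Fin m → Shrink.{u} S.toSet := fun i => equivShrink.{u} S.toSet ⟨b i, hbj i⟩
  have ea : (fun i => (((equivShrink.{u} S.toSet).symm (aa i)) : ZFSet.{u})) = a := by
    funext i; simp [aa]
  have eb : (fun i => (((equivShrink.{u} S.toSet).symm (bb i)) : ZFSet.{u})) = b := by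
    funext i; simp [bb]
  have hwit : witFun S ⟨k, m, ψ, aa, bb⟩ ∈ ZFSet.range (witFun S) := by
    rw [ZFSet.mem_range]; exact ⟨⟨k, m, ψ, aa, bb⟩, rfl⟩
  have hcond : ∃ x, ((⟨k, m, ψ, aa, bb⟩ : WitIdx S)).2.2.1.Realize
      (fun i => (((equivShrink.{u} S.toSet).symm (((⟨k, m, ψ, aa, bb⟩ : WitIdx S)).2.2.2.1 i)) : ZFSet.{u}))
      (Fin.snoc (fun i => (((equivShrink.{u} S.toSet).symm (((⟨k, m, ψ, aa, bb⟩ : WitIdx S)).2.2.2.2 i)) : ZFSet.{u})) x) := by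
    show ∃ x, ψ.Realize _ _
    rw [ea, eb]; exact hex
  have hval : witFun S ⟨k, m, ψ, aa, bb⟩ = hcond.choose := by
    unfold witFun
    rw [dif_pos hcond]
  refine ⟨witFun S ⟨k, m, ψ, aa, bb⟩, ?_, ?_⟩
  · refine mem_bigM.2 ⟨j + 1, ?_⟩
    exact ZFSet.mem_union.2 (Or.inr hwit)
  · rw [hval, ← ea, ← eb]
    exact hcond.choose_spec

end aux

/-- **Reflection principle over the universe of ZF sets.** For every formula
`φ(x₀, …, x_{n-1})` in the language with one binary relation symbol and every
`A : ZFSet`, there is a transitive, supertransitive `M : ZFSet` with `A ∈ M`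
that reflects `φ`: for all parameters from `M`, `φ` holds in the induced
structure on the elements of `M` iff it holds in `ZFSet`. -/
theorem zfSet_reflection (n : ℕ) (φ : memLang.Formula (Fin n)) (A : ZFSet.{u}) :
    ∃ M : ZFSet.{u},
      (∀ x y : ZFSet.{u}, x ∈ y → y ∈ M → x ∈ M) ∧
      (∀ x y : ZFSet.{u}, x ⊆ y → y ∈ M → x ∈ M) ∧
      A ∈ M ∧
      ∀ a : Fin n → {x : ZFSet.{u} // x ∈ M},
        φ.Realize a ↔ φ.Realize (fun i => (a i).1) := by
  refine ⟨bigM A, fun x y h1 h2 => bigM_trans h1 h2,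
    fun x y h1 h2 => bigM_supertrans h1 h2, A_mem_bigM A, ?_⟩
  intro a
  have key := key_equiv (bigM A) (bigM_witness A) n 0 φ a default
  unfold FirstOrder.Language.Formula.Realize
  convert key using 2 <;> exact Subsingleton.elim _ _
end
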